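/- arXiv:2103.05300 — 3 statements merged into one kernel-verified Lean document; each statement's English description precedes it below -/
import Mathlib

section
/- Let λ̄ ∈ ℝ, let f : ℝ → ℝ, let ε > 0, and let λ, u, v : ℝ × ℝ → ℝ be twice continuously differentiable functions of (t, x) satisfying at every point the regularized symmetrized rotating shallow water system: ∂ₜλ + u∂ₓλ + (λ/2)∂ₓu = ε∂ₓₓλ, ∂ₜu + (λ/2)∂ₓλ + u∂ₓu − f(x)·v = ε∂ₓₓu, ∂ₜv + u∂ₓv + f(x)·u = ε∂ₓₓv. Define η(λ,u,v) = (λ²/8)(u² + v²) + (1/2)·((λ² − λ̄²)/4)² and G(λ,u,v) = (λ²u/8)(u² + v²) + (λ²u/4)·((λ² − λ̄²)/4). Then at every point (t, x): ∂ₜ[η(λ,u,v)] + ∂ₓ[G(λ,u,v)] = ε·[ (λ(u²+v²)/4 + λ(λ²−λ̄²)/8)·∂ₓₓλ + (λ²u/4)·∂ₓₓu + (λ²v/4)·∂ₓₓv ], where all functions are evaluated at (t, x). -/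
/-- The entropy `η(λ,u,v) = (λ²/8)(u²+v²) + (1/2)((λ²−λ̄²)/4)²`. -/
noncomputable def rswEntropy (lamBar lam u v : ℝ) : ℝ :=
  lam ^ 2 / 8 * (u ^ 2 + v ^ 2) + 1 / 2 * ((lam ^ 2 - lamBar ^ 2) / 4) ^ 2

/-- The entropy flux `G(λ,u,v) = (λ²u/8)(u²+v²) + (λ²u/4)((λ²−λ̄²)/4)`. -/
noncomputable def rswEntropyFlux (lamBar lam u v : ℝ) : ℝ :=
  lam ^ 2 * u / 8 * (u ^ 2 + v ^ 2) + lam ^ 2 * u / 4 * ((lam ^ 2 - lamBar ^ 2) / 4)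

private lemma slice_t (g : ℝ × ℝ → ℝ) (hg : ContDiff ℝ 2 g) (t x : ℝ) :
    HasDerivAt (fun s => g (s, x)) (deriv (fun s => g (s, x)) t) t := by
  have h : Differentiable ℝ (fun s : ℝ => g (s, x)) :=
    (hg.differentiable (by norm_num)).comp
      (differentiable_id.prodMk (differentiable_const x))
  exact (h t).hasDerivAt

private lemma slice_x (g : ℝ × ℝ → ℝ) (hg : ContDiff ℝ 2 g) (t x : ℝ) :
    HasDerivAt (fun y => g (t, y)) (deriv (fun y => g (t, y)) x) x := by
  have h : Differentiable ℝ (fun y : ℝ => g (t, y)) :=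
    (hg.differentiable (by norm_num)).comp
      ((differentiable_const t).prodMk differentiable_id)
  exact (h x).hasDerivAt

/-- Along C² solutions of the diffusively regularized symmetrized rotating shallow
water system, `∂ₜ η(V) + ∂ₓ G(V) = ε ∇η(V) · ∂ₓₓ V`. -/
theorem stmt_5 (lamBar : ℝ) (f : ℝ → ℝ) (ε : ℝ) (hε : 0 < ε) (lam u v : ℝ × ℝ → ℝ)
    (hlam : ContDiff ℝ 2 lam) (hu : ContDiff ℝ 2 u) (hv : ContDiff ℝ 2 v)
    (heq1 : ∀ t x, deriv (fun s => lam (s, x)) t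
        + u (t, x) * deriv (fun y => lam (t, y)) x
        + lam (t, x) / 2 * deriv (fun y => u (t, y)) x
        = ε * deriv (deriv (fun y => lam (t, y))) x)
    (heq2 : ∀ t x, deriv (fun s => u (s, x)) t
        + lam (t, x) / 2 * deriv (fun y => lam (t, y)) x
        + u (t, x) * deriv (fun y => u (t, y)) x - f x * v (t, x)
        = ε * deriv (deriv (fun y => u (t, y))) x)
    (heq3 : ∀ t x, deriv (fun s => v (s, x)) t
        + u (t, x) * deriv (fun y => v (t, y)) x + f x * u (t, x)
        = ε * deriv (deriv (fun y => v (t, y))) x) :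
    ∀ t x,
      deriv (fun s => rswEntropy lamBar (lam (s, x)) (u (s, x)) (v (s, x))) t
        + deriv (fun y => rswEntropyFlux lamBar (lam (t, y)) (u (t, y)) (v (t, y))) x
      = ε * ((lam (t, x) * ((u (t, x)) ^ 2 + (v (t, x)) ^ 2) / 4
              + lam (t, x) * ((lam (t, x)) ^ 2 - lamBar ^ 2) / 8)
                * deriv (deriv (fun y => lam (t, y))) x
            + (lam (t, x)) ^ 2 * u (t, x) / 4 * deriv (deriv (fun y => u (t, y))) x
            + (lam (t, x)) ^ 2 * v (t, x) / 4 * deriv (deriv (fun y => v (t, y))) x) := by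
  intro t x
  have hlt := slice_t lam hlam t x
  have hut := slice_t u hu t x
  have hvt := slice_t v hv t x
  have hlx := slice_x lam hlam t x
  have hux := slice_x u hu t x
  have hvx := slice_x v hv t x
  set A := lam (t, x)
  set B := u (t, x)
  set C := v (t, x)
  set at' := deriv (fun s => lam (s, x)) t
  set bt := deriv (fun s => u (s, x)) t
  set ct := deriv (fun s => v (s, x)) t
  set ax := deriv (fun y => lam (t, y)) x
  set bx := deriv (fun y => u (t, y)) x
  set cx := deriv (fun y => v (t, y)) x
  have Ht : HasDerivAt (fun s => rswEntropy lamBar (lam (s, x)) (u (s, x)) (v (s, x)))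
      ((2 * A ^ 1 * at' / 8) * (B ^ 2 + C ^ 2)
        + A ^ 2 / 8 * (2 * B ^ 1 * bt + 2 * C ^ 1 * ct)
        + 1 / 2 * (2 * ((A ^ 2 - lamBar ^ 2) / 4) ^ 1 * (2 * A ^ 1 * at' / 4))) t := by
    unfold rswEntropy
    exact ((((hlt.pow 2).div_const 8).mul ((hut.pow 2).add (hvt.pow 2))).add
      ((((((hlt.pow 2).sub_const (lamBar ^ 2)).div_const 4).pow 2)).const_mul (1 / 2)))
  have Hx : HasDerivAt (fun y => rswEntropyFlux lamBar (lam (t, y)) (u (t, y)) (v (t, y)))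
      (((2 * A ^ 1 * ax * B + A ^ 2 * bx) / 8) * (B ^ 2 + C ^ 2)
        + A ^ 2 * B / 8 * (2 * B ^ 1 * bx + 2 * C ^ 1 * cx)
        + (((2 * A ^ 1 * ax * B + A ^ 2 * bx) / 4) * ((A ^ 2 - lamBar ^ 2) / 4)
            + A ^ 2 * B / 4 * (2 * A ^ 1 * ax / 4))) x := by
    unfold rswEntropyFlux
    exact (((((hlx.pow 2).mul hux).div_const 8).mul ((hux.pow 2).add (hvx.pow 2))).add
      ((((hlx.pow 2).mul hux).div_const 4).mul
        (((hlx.pow 2).sub_const (lamBar ^ 2)).div_const 4)))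
  rw [Ht.deriv, Hx.deriv]
  have e1 := heq1 t x
  have e2 := heq2 t x
  have e3 := heq3 t x
  linear_combination (A * (B ^ 2 + C ^ 2) / 4 + A * (A ^ 2 - lamBar ^ 2) / 8) * e1
    + (A ^ 2 * B / 4) * e2 + (A ^ 2 * C / 4) * e3
end

section
/- Let α > 0 and let h : ℝ → ℝ be twice continuously differentiable with h(x) ≥ α for all x, and assume h′ has compact support. Then ∫_ℝ h′′(x)·h′(x)²/h(x) dx = (1/3)·∫_ℝ h′(x)⁴/h(x)² dx. -/
open MeasureTheory Set

/-- If `h` is C² with `h ≥ α > 0` and `h′` has compact support, then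
`∫ h″ h′²/h = (1/3) ∫ h′⁴/h²`. -/
theorem stmt_14 (α : ℝ) (hα : 0 < α) (h : ℝ → ℝ)
    (hh : ContDiff ℝ 2 h) (hge : ∀ x, α ≤ h x)
    (hsupp : HasCompactSupport (deriv h)) :
    ∫ x, deriv (deriv h) x * (deriv h x) ^ 2 / h x =
      (1 / 3) * ∫ x, (deriv h x) ^ 4 / (h x) ^ 2 := by
  have hx0 : ∀ x, h x ≠ 0 := fun x => ne_of_gt (lt_of_lt_of_le hα (hge x))
  have hh' : ContDiff ℝ 1 (deriv h) := by
    have := (contDiff_succ_iff_deriv.mp (by exact_mod_cast hh : ContDiff ℝ (1+1) h)).2.2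
    exact this
  have hdiff : Differentiable ℝ h := hh.differentiable (by norm_num)
  have hdiff' : Differentiable ℝ (deriv h) := hh'.differentiable (by norm_num)
  set u := deriv h with hu
  -- value of the bracket function
  set F : ℝ → ℝ := fun x => (u x) ^ 3 / h x with hF
  have hFderiv : ∀ x, HasDerivAt F
      (3 * (deriv u x * (u x) ^ 2 / h x) - (u x) ^ 4 / (h x) ^ 2) x := by
    intro x
    have h1 : HasDerivAt (fun y => (u y) ^ 3) (3 * u x ^ 2 * deriv u x) x := by
      have := ((hdiff' x).hasDerivAt.pow 3)
      simpa [mul_comm, Pi.pow_def] using this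
    have h2 : HasDerivAt h (u x) x := (hdiff x).hasDerivAt
    have : HasDerivAt F ((3 * u x ^ 2 * deriv u x * h x - u x ^ 3 * u x) / h x ^ 2) x :=
      h1.div h2 (hx0 x)
    convert this using 1
    field_simp [hx0 x]
  have hFcont : ContDiff ℝ 1 F := by
    exact hh'.pow 3 |>.div (hh.of_le (by norm_num)) hx0
  have hFsupp : HasCompactSupport F := by
    apply hsupp.mono
    intro x hx
    simp only [Function.mem_support] at hx ⊢
    intro hux
    apply hx
    simp [hF, hux]
  -- integral of deriv F is 0
  have hFint : ∫ x, deriv F x = 0 := by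
    rw [← intervalIntegral.integral_Iic_add_Ioi (f := fun x => deriv F x) (b := 0)
      ((hFcont.continuous_deriv le_rfl).integrable_of_hasCompactSupport
        hFsupp.deriv).integrableOn
      ((hFcont.continuous_deriv le_rfl).integrable_of_hasCompactSupport
        hFsupp.deriv).integrableOn]
    rw [HasCompactSupport.integral_Iic_deriv_eq hFcont hFsupp 0,
      HasCompactSupport.integral_Ioi_deriv_eq hFcont hFsupp 0]
    ring
  have hderivF : ∀ x, deriv F x =
      3 * (deriv u x * (u x) ^ 2 / h x) - (u x) ^ 4 / (h x) ^ 2 := fun x =>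
    (hFderiv x).deriv
  -- integrability of the two pieces
  have hcont1 : Continuous fun x => deriv u x * (u x) ^ 2 / h x :=
    ((hh'.continuous_deriv le_rfl).mul (hh'.continuous.pow 2)).div
      (hh.continuous) hx0
  have hcont2 : Continuous fun x => (u x) ^ 4 / (h x) ^ 2 :=
    (hh'.continuous.pow 4).div (hh.continuous.pow 2) (fun x => pow_ne_zero _ (hx0 x))
  have hs1 : HasCompactSupport fun x => deriv u x * (u x) ^ 2 / h x := by
    apply hsupp.mono
    intro x hx
    simp only [Function.mem_support] at hx ⊢
    intro hux
    apply hx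
    simp [hux]
  have hs2 : HasCompactSupport fun x => (u x) ^ 4 / (h x) ^ 2 := by
    apply hsupp.mono
    intro x hx
    simp only [Function.mem_support] at hx ⊢
    intro hux
    apply hx
    simp [hux]
  have hi1 : Integrable (fun x => deriv u x * (u x) ^ 2 / h x) := hcont1.integrable_of_hasCompactSupport hs1
  have hi2 : Integrable (fun x => (u x) ^ 4 / (h x) ^ 2) := hcont2.integrable_of_hasCompactSupport hs2
  have key : (3 : ℝ) * (∫ x, deriv u x * (u x) ^ 2 / h x) -
      ∫ x, (u x) ^ 4 / (h x) ^ 2 = 0 := by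
    rw [← MeasureTheory.integral_const_mul 3, ← integral_sub (hi1.const_mul 3) hi2]
    rw [← hFint]
    congr 1
    ext x
    rw [hderivF x]
  have : ∫ x, deriv u x * (u x) ^ 2 / h x =
      (1 / 3) * ∫ x, (u x) ^ 4 / (h x) ^ 2 := by linarith
  exact this
end

section
/- Let α > 0 and let h : ℝ → ℝ be twice continuously differentiable with h(x) ≥ α for all x, and assume h′ has compact support. Then ∫_ℝ h′′(x)² dx = ∫_ℝ (h′′(x) − h′(x)²/(2h(x)))² dx + (1/12)·∫_ℝ h′(x)⁴/h(x)² dx. In particular ‖h′′‖²_{L²(ℝ)} ≤ ‖h′′ − h′²/(2h)‖²_{L²(ℝ)} + (1/12)·∫_ℝ h′⁴/h² dx. -/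
open MeasureTheory Set

/-- If `h` is C² with `h ≥ α > 0` and `h′` has compact support, then
`∫ h″² = ∫ (h″ − h′²/(2h))² + (1/12) ∫ h′⁴/h²`; in particular
`‖h″‖²_{L²} ≤ ‖h″ − h′²/(2h)‖²_{L²} + (1/12) ∫ h′⁴/h²`. -/
theorem stmt_15 (α : ℝ) (hα : 0 < α) (h : ℝ → ℝ)
    (hh : ContDiff ℝ 2 h) (hge : ∀ x, α ≤ h x)
    (hsupp : HasCompactSupport (deriv h)) :
    (∫ x, (deriv (deriv h) x) ^ 2 =
        (∫ x, (deriv (deriv h) x - (deriv h x) ^ 2 / (2 * h x)) ^ 2)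
          + (1 / 12) * ∫ x, (deriv h x) ^ 4 / (h x) ^ 2) ∧
    (∫ x, (deriv (deriv h) x) ^ 2 ≤
        (∫ x, (deriv (deriv h) x - (deriv h x) ^ 2 / (2 * h x)) ^ 2)
          + (1 / 12) * ∫ x, (deriv h x) ^ 4 / (h x) ^ 2) := by
  have hpos : ∀ x, 0 < h x := fun x => lt_of_lt_of_le hα (hge x)
  have hne : ∀ x, h x ≠ 0 := fun x => (hpos x).ne'
  have h2 : (2 : WithTop ℕ∞) = 1 + 1 := by norm_num
  have hd1 : ContDiff ℝ 1 (deriv h) := (contDiff_succ_iff_deriv.mp (h2 ▸ hh)).2.2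
  have hdiff : Differentiable ℝ h := hh.differentiable (by norm_num)
  have hd1diff : Differentiable ℝ (deriv h) := hd1.differentiable (by norm_num)
  have hcont : Continuous h := hh.continuous
  have hc1 : Continuous (deriv h) := hd1.continuous
  have hc2 : Continuous (deriv (deriv h)) := hd1.continuous_deriv le_rfl
  -- g = h'^3 / h
  set g : ℝ → ℝ := fun x => (deriv h x) ^ 3 / h x with hg
  have hgC1 : ContDiff ℝ 1 g := (hd1.pow 3).div (hh.of_le (by norm_num)) hne
  have hgsupp : HasCompactSupport g := by
    have e : g = (deriv h) * fun x => (deriv h x) ^ 2 / h x := by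
      funext x; simp only [hg, Pi.mul_apply]; ring
    rw [e]; exact hsupp.mul_right
  have hdg : ∀ x, deriv g x
      = 3 * deriv (deriv h) x * deriv h x ^ 2 / h x - deriv h x ^ 4 / h x ^ 2 := by
    intro x
    have H := ((hd1diff x).hasDerivAt.pow 3).div (hdiff x).hasDerivAt (hne x)
    have hx := hne x
    have e1 : 3 * deriv (deriv h) x * deriv h x ^ 2 / h x
        = 3 * deriv (deriv h) x * deriv h x ^ 2 * h x / h x ^ 2 := by
      rw [pow_two (h x)]
      exact (mul_div_mul_right _ _ hx).symm
    rw [show deriv g x = _ from H.deriv, e1, div_sub_div_same]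
    congr 1
    push_cast [Pi.pow_apply]
    ring
  have hdgcont : Continuous (deriv g) := hgC1.continuous_deriv le_rfl
  have hdgsupp : HasCompactSupport (deriv g) := hgsupp.deriv
  have hdgint : Integrable (deriv g) := hdgcont.integrable_of_hasCompactSupport hdgsupp
  have hint0 : ∫ x, deriv g x = 0 := by
    have hIic := hgsupp.integral_Iic_deriv_eq hgC1 0
    have hIoi := hgsupp.integral_Ioi_deriv_eq hgC1 0
    rw [← intervalIntegral.integral_Iic_add_Ioi (b := 0) hdgint.integrableOn hdgint.integrableOn, hIic, hIoi]
    ring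
  -- integrability of pieces
  have hsupp2 : HasCompactSupport (deriv (deriv h)) := hsupp.deriv
  have hAsupp : HasCompactSupport (fun x => (deriv (deriv h) x) ^ 2) := by
    have e : (fun x => (deriv (deriv h) x) ^ 2)
        = deriv (deriv h) * deriv (deriv h) := by funext x; simp [sq]
    rw [e]; exact hsupp2.mul_right
  have hAint : Integrable (fun x => (deriv (deriv h) x) ^ 2) :=
    (hc2.pow 2).integrable_of_hasCompactSupport hAsupp
  have hQsupp : HasCompactSupport (fun x => (deriv h x) ^ 4 / h x ^ 2) := by
    have e : (fun x => (deriv h x) ^ 4 / h x ^ 2)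
        = deriv h * fun x => (deriv h x) ^ 3 / h x ^ 2 := by
      funext x; simp only [Pi.mul_apply]; ring
    rw [e]; exact hsupp.mul_right
  have hQcont : Continuous (fun x => (deriv h x) ^ 4 / h x ^ 2) :=
    (hc1.pow 4).div (hcont.pow 2) (fun x => pow_ne_zero 2 (hne x))
  have hQint : Integrable (fun x => (deriv h x) ^ 4 / h x ^ 2) :=
    hQcont.integrable_of_hasCompactSupport hQsupp
  -- key pointwise identity
  have key : ∀ x, (deriv (deriv h) x - (deriv h x) ^ 2 / (2 * h x)) ^ 2
      = (deriv (deriv h) x) ^ 2 - (1 / 3) * deriv g x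
        - (1 / 12) * ((deriv h x) ^ 4 / h x ^ 2) := by
    intro x
    rw [hdg x]
    have hx := hne x
    field_simp
    ring
  have hsplit : (∫ x, (deriv (deriv h) x - (deriv h x) ^ 2 / (2 * h x)) ^ 2)
      = (∫ x, (deriv (deriv h) x) ^ 2) - (1 / 12) * ∫ x, (deriv h x) ^ 4 / h x ^ 2 := by
    have e : (fun x => (deriv (deriv h) x - (deriv h x) ^ 2 / (2 * h x)) ^ 2)
        = fun x => (deriv (deriv h) x) ^ 2 - (1 / 3) * deriv g x
          - (1 / 12) * ((deriv h x) ^ 4 / h x ^ 2) := by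
      funext x; exact key x
    have i1 : Integrable (fun x => deriv (deriv h) x ^ 2 - 1 / 3 * deriv g x) :=
      hAint.sub (hdgint.const_mul _)
    have i2 : Integrable (fun x => (1 : ℝ) / 12 * (deriv h x ^ 4 / h x ^ 2)) :=
      hQint.const_mul _
    rw [e, integral_sub i1 i2, integral_sub hAint (hdgint.const_mul _),
      integral_const_mul, integral_const_mul, hint0]
    ring
  constructor
  · rw [hsplit]; ring
  · exact le_of_eq (by rw [hsplit]; ring)
end
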